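/- Existence of ZD strategies (sufficiency direction): Let B : A^n → ℝ be not identically zero. If there exist two distinct actions ā, a̲ ∈ A of player j such that B(ā, a_{-j}) ≥ 0 for all a_{-j} and B(a̲, a_{-j}) ≤ 0 for all a_{-j}, then there exists a time-independent memory-one strategy T_j and nontrivial coefficients (c_a)_{a∈A} (not all equal) such that Σ_{a_j} c_{a_j} T̂_j(a_j | a') = B(a') for all profiles a', possibly after rescaling B by a positive constant. -/
import Mathlib

open Finset

lemma zd_sum_pair {A : Type} [Fintype A] [DecidableEq A] (p q : A) (h : p ≠ q) (u v : ℝ) :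
    ∑ x, (if x = p then u else if x = q then v else 0) = u + v := by
  have hc : ∀ x ∈ Finset.univ, (if x = p then u else if x = q then v else (0:ℝ))
      = (if x = p then u else 0) + (if x = q then v else 0) := by
    intro x _
    by_cases h1 : x = p
    · subst h1; simp [h]
    · simp [h1]
  rw [Finset.sum_congr rfl hc, Finset.sum_add_distrib,
    Finset.sum_ite_eq' Finset.univ p (fun _ => u),
    Finset.sum_ite_eq' Finset.univ q (fun _ => v)]
  simp

lemma zd_sum_triple {A : Type} [Fintype A] [DecidableEq A] (p q r : A)
    (hpq : p ≠ q) (hpr : p ≠ r) (hqr : q ≠ r) (u v w : ℝ) :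
    ∑ x, (if x = p then u else if x = q then v else if x = r then w else 0) = u + v + w := by
  have hc : ∀ x ∈ Finset.univ, (if x = p then u else if x = q then v else if x = r then w else (0:ℝ))
      = (if x = p then u else 0) + ((if x = q then v else 0) + (if x = r then w else 0)) := by
    intro x _
    by_cases h1 : x = p
    · subst h1; simp [hpq, hpr]
    · by_cases h2 : x = q
      · subst h2; simp [h1, hqr]
      · simp [h1, h2]
  rw [Finset.sum_congr rfl hc, Finset.sum_add_distrib, Finset.sum_add_distrib,
    Finset.sum_ite_eq' Finset.univ p (fun _ => u),
    Finset.sum_ite_eq' Finset.univ q (fun _ => v),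
    Finset.sum_ite_eq' Finset.univ r (fun _ => w)]
  simp [add_assoc]

lemma zd_sum_coeff {A : Type} [Fintype A] [DecidableEq A] (p q : A) (h : p ≠ q) (f : A → ℝ) :
    ∑ x, (if x = p then (1:ℝ) else if x = q then -1 else 0) * f x = f p - f q := by
  have hc : ∀ x ∈ Finset.univ, (if x = p then (1:ℝ) else if x = q then -1 else 0) * f x
      = (if x = p then f x else 0) + (if x = q then -f x else 0) := by
    intro x _
    by_cases h1 : x = p
    · subst h1; simp [h]
    · by_cases h2 : x = q
      · subst h2; rw [if_neg h1, if_pos rfl, if_neg h1, if_pos rfl]; ring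
      · simp [h1, h2]
  rw [Finset.sum_congr rfl hc, Finset.sum_add_distrib,
    Finset.sum_ite_eq' Finset.univ p f,
    Finset.sum_ite_eq' Finset.univ q (fun x => -f x)]
  simp [sub_eq_add_neg]

theorem zd_exists_of_sign_actions {n : ℕ} {A : Type} [Fintype A] [DecidableEq A]
    (j : Fin n) (B : (Fin n → A) → ℝ)
    (hB : ∃ a, B a ≠ 0)
    (abar aund : A) (hne : abar ≠ aund)
    (hpos : ∀ a : Fin n → A, a j = abar → 0 ≤ B a)
    (hneg : ∀ a : Fin n → A, a j = aund → B a ≤ 0) :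
    ∃ (T : (Fin n → A) → A → ℝ) (c : A → ℝ) (α : ℝ),
      0 < α ∧
      (∀ a', (∀ x, 0 ≤ T a' x) ∧ ∑ x, T a' x = 1) ∧
      (∃ x y : A, c x ≠ c y) ∧
      (∀ a' : Fin n → A,
        ∑ x, c x * (T a' x - (if x = a' j then 1 else 0)) = α * B a') := by
  have hAne : Nonempty (Fin n → A) := ⟨fun _ => abar⟩
  obtain ⟨M, hM⟩ : ∃ M : ℝ, 0 ≤ M ∧ ∀ a, |B a| ≤ M := by
    refine ⟨Finset.univ.sup' Finset.univ_nonempty (fun a : Fin n → A => |B a|), ?_, ?_⟩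
    · exact le_trans (abs_nonneg _) (Finset.le_sup' (fun a : Fin n → A => |B a|) (Finset.mem_univ ((fun _ => abar) : Fin n → A)))
    · intro a; exact Finset.le_sup' (fun a : Fin n → A => |B a|) (Finset.mem_univ a)
  set α : ℝ := 1 / (M + 1) with hαdef
  have hMpos : (0:ℝ) < M + 1 := by linarith [hM.1]
  have hα : 0 < α := by positivity
  have hα1 : ∀ a, α * |B a| ≤ 1 := by
    intro a
    rw [hαdef, div_mul_eq_mul_div, one_mul, div_le_one hMpos]
    linarith [hM.2 a]
  -- the strategy
  set T : (Fin n → A) → A → ℝ := fun a' x =>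
    if a' j = abar then (if x = aund then α * B a' / 2 else if x = abar then 1 - α * B a' / 2 else 0)
    else if a' j = aund then (if x = aund then 1 + α * B a' / 2 else if x = abar then -(α * B a' / 2) else 0)
    else (if x = a' j then 1 - α * |B a'| else if x = aund then max (α * B a') 0
          else if x = abar then max (-(α * B a')) 0 else 0) with hT
  refine ⟨T, fun x => if x = aund then 1 else if x = abar then -1 else 0, α, hα, ?_, ?_, ?_⟩
  · intro a'
    by_cases h1 : a' j = abar
    · have hBnn : 0 ≤ B a' := hpos a' h1
      have hb : α * B a' ≤ 1 := by
        have := hα1 a'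
        rw [abs_of_nonneg hBnn] at this
        exact this
      have hab : 0 ≤ α * B a' := mul_nonneg hα.le hBnn
      constructor
      · intro x
        simp only [hT, if_pos h1]
        by_cases h2 : x = aund
        · simp only [if_pos h2]; positivity
        · by_cases h3 : x = abar
          · simp only [if_neg h2, if_pos h3]; linarith
          · simp only [if_neg h2, if_neg h3]; exact le_refl 0
      · simp only [hT, if_pos h1]
        rw [zd_sum_pair aund abar (Ne.symm hne)]
        ring
    · by_cases h2 : a' j = aund
      · have hBnp : B a' ≤ 0 := hneg a' h2
        have hb : -1 ≤ α * B a' := by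
          have := hα1 a'
          rw [abs_of_nonpos hBnp] at this
          linarith
        have hab : α * B a' ≤ 0 := mul_nonpos_of_nonneg_of_nonpos hα.le hBnp
        constructor
        · intro x
          simp only [hT, if_neg h1, if_pos h2]
          by_cases h3 : x = aund
          · simp only [if_pos h3]; linarith
          · by_cases h4 : x = abar
            · simp only [if_neg h3, if_pos h4]; linarith
            · simp only [if_neg h3, if_neg h4]; exact le_refl 0
        · simp only [hT, if_neg h1, if_pos h2]
          rw [zd_sum_pair aund abar (Ne.symm hne)]
          ring
      · have hb : α * |B a'| ≤ 1 := hα1 a'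
        have habs : 0 ≤ α * |B a'| := mul_nonneg hα.le (abs_nonneg _)
        constructor
        · intro x
          simp only [hT, if_neg h1, if_neg h2]
          by_cases h3 : x = a' j
          · simp only [if_pos h3]; linarith
          · by_cases h4 : x = aund
            · simp only [if_neg h3, if_pos h4]; exact le_max_right _ _
            · by_cases h5 : x = abar
              · simp only [if_neg h3, if_neg h4, if_pos h5]; exact le_max_right _ _
              · simp only [if_neg h3, if_neg h4, if_neg h5]; exact le_refl 0
        · simp only [hT, if_neg h1, if_neg h2]
          rw [zd_sum_triple (a' j) aund abar (fun h => h2 h) (fun h => h1 h) (Ne.symm hne)]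
          rcases le_total (B a') 0 with hle | hle
          · have hm1 : max (α * B a') 0 = 0 :=
              max_eq_right (mul_nonpos_of_nonneg_of_nonpos hα.le hle)
            have hm2 : max (-(α * B a')) 0 = -(α * B a') :=
              max_eq_left (by nlinarith [hα.le])
            rw [hm1, hm2, abs_of_nonpos hle]; ring
          · have hm1 : max (α * B a') 0 = α * B a' :=
              max_eq_left (mul_nonneg hα.le hle)
            have hm2 : max (-(α * B a')) 0 = 0 :=
              max_eq_right (by nlinarith [hα.le])
            rw [hm1, hm2, abs_of_nonneg hle]; ring
  · exact ⟨aund, abar, by simp [hne, Ne.symm hne]; norm_num⟩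
  · intro a'
    rw [zd_sum_coeff aund abar (Ne.symm hne)]
    by_cases h1 : a' j = abar
    · have haund : aund ≠ a' j := by rw [h1]; exact Ne.symm hne
      have habar : abar = a' j := h1.symm
      simp [hT, h1, hne, Ne.symm hne, haund, habar.symm]
    · by_cases h2 : a' j = aund
      · have haund : aund = a' j := h2.symm
        have habar : abar ≠ a' j := by rw [h2]; exact hne
        simp [hT, h1, h2, hne, Ne.symm hne, haund.symm, habar]
      · have haund : aund ≠ a' j := fun h => h2 h.symm
        have habar : abar ≠ a' j := fun h => h1 h.symm
        simp only [hT, if_neg h1, if_neg h2, if_neg hne, if_neg (Ne.symm hne),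
          if_neg haund, if_neg habar, if_pos rfl]
        rcases le_total (B a') 0 with hle | hle
        · have hm1 : max (α * B a') 0 = 0 :=
            max_eq_right (mul_nonpos_of_nonneg_of_nonpos hα.le hle)
          have hm2 : max (-(α * B a')) 0 = -(α * B a') :=
            max_eq_left (by nlinarith [hα.le])
          rw [hm1, hm2]; simp
        · have hm1 : max (α * B a') 0 = α * B a' :=
            max_eq_left (mul_nonneg hα.le hle)
          have hm2 : max (-(α * B a')) 0 = 0 :=
            max_eq_right (by nlinarith [hα.le])
          rw [hm1, hm2]; simp
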